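/- Let D and D' be unconditionally equivalent DAGs on the same finite vertex set V. Then {de_D(m) : m a source node of D} = {de_{D'}(m) : m a source node of D'}, i.e., E^D = E^{D'}. -/

import Mathlib

namespace UEC

variable {V : Type*}

/-- A directed graph is a DAG if it has no directed cycles. -/
def IsDAG (D : Digraph V) : Prop := ∀ v : V, ¬ Relation.TransGen D.Adj v v

/-- `an D v` : the set of ancestors of `v` (nodes with a directed path to `v`),
including `v` itself. -/
def an (D : Digraph V) (v : V) : Set V := {u | Relation.ReflTransGen D.Adj u v}

/-- `de D v` : the set of descendants of `v` (nodes reachable by a directed path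
from `v`), including `v` itself. -/
def de (D : Digraph V) (v : V) : Set V := {u | Relation.ReflTransGen D.Adj v u}

/-- `pa D v` : the set of parents of `v`. -/
def pa (D : Digraph V) (v : V) : Set V := {u | D.Adj u v}

/-- A source node is a node with no parents. -/
def IsSource (D : Digraph V) (v : V) : Prop := pa D v = ∅

/-- `sources D` : the set of source nodes of `D` (denoted `ma_D(V)` in the paper). -/
def sources (D : Digraph V) : Set V := {v | IsSource D v}

/-- Ancestors of a set of nodes. -/
def anSet (D : Digraph V) (A : Set V) : Set V := ⋃ a ∈ A, an D a

/-- `maSet D A = {u ∈ an_D(A) : an_D(u) = {u}}`, the source nodes that are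
ancestors of `A`. -/
def maSet (D : Digraph V) (A : Set V) : Set V :=
  {u | u ∈ anSet D A ∧ an D u = {u}}

/-- Two nodes are adjacent in a digraph if there is an edge between them in
either direction. -/
def Adjacent (D : Digraph V) (v w : V) : Prop := D.Adj v w ∨ D.Adj w v

/-- A trek in `D` is a path over distinct vertices (given as the list of its
vertices, consecutive ones being adjacent) containing no collider
`p i → p (i+1) ← p (i+2)` as a subpath. -/
def IsTrekList (D : Digraph V) (p : List V) : Prop :=
  p.Nodup ∧
    (∀ i : ℕ, (h : i + 1 < p.length) →
      (D.Adj (p.get ⟨i, by omega⟩) (p.get ⟨i + 1, h⟩) ∨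
        D.Adj (p.get ⟨i + 1, h⟩) (p.get ⟨i, by omega⟩))) ∧
    (∀ i : ℕ, (h : i + 2 < p.length) →
      ¬(D.Adj (p.get ⟨i, by omega⟩) (p.get ⟨i + 1, by omega⟩) ∧
        D.Adj (p.get ⟨i + 2, h⟩) (p.get ⟨i + 1, by omega⟩)))

/-- There is a trek between `v` and `w` in `D`. -/
def HasTrek (D : Digraph V) (v w : V) : Prop :=
  ∃ p : List V, IsTrekList D p ∧ p.head? = some v ∧ p.getLast? = some w

/-- Adjacency in the unconditional dependence graph `U^D` : two distinct nodes
are adjacent iff there is a trek between them. -/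
def UAdj (D : Digraph V) (v w : V) : Prop :=
  v ≠ w ∧ (HasTrek D v w ∨ HasTrek D w v)

/-- Two digraphs on the same vertex set are unconditionally equivalent if for
all distinct nodes there is a trek between them in one iff there is one in the
other. -/
def UncondEquiv (D D' : Digraph V) : Prop :=
  ∀ v w : V, v ≠ w → (HasTrek D v w ↔ HasTrek D' v w)

/-- The digraph obtained by adding the edge `v → w`. -/
def addEdge (D : Digraph V) (v w : V) : Digraph V :=
  ⟨fun a b => D.Adj a b ∨ (a = v ∧ b = w)⟩

/-- The digraph obtained by deleting the edge `v → w`. -/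
def delEdge (D : Digraph V) (v w : V) : Digraph V :=
  ⟨fun a b => D.Adj a b ∧ ¬(a = v ∧ b = w)⟩

/-- The digraph obtained by replacing the edge `v → w` with `w → v`. -/
def revEdge (D : Digraph V) (v w : V) : Digraph V :=
  ⟨fun a b => (D.Adj a b ∧ ¬(a = v ∧ b = w)) ∨ (a = w ∧ b = v)⟩

/-- The ordered pair `(v, w)` is partially weakly covered in `D`. -/
def PartiallyWeaklyCovered (D : Digraph V) (v w : V) : Prop :=
  maSet D {v} ⊆ maSet D {w} ∧ v ∉ an D w ∧ w ∉ an D v ∧ pa D v ≠ ∅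

/-- The ordered pair `(v, w)` is implied by transitivity in `D`, i.e.
`v ∈ an_D(w) \ ({w} ∪ pa_D(w))`. -/
def ImpliedByTransitivity (D : Digraph V) (v w : V) : Prop :=
  v ∈ an D w \ ({w} ∪ pa D w)

/-- The edge `v → w` is weakly covered in `D`. -/
def WeaklyCovered (D : Digraph V) (v w : V) : Prop :=
  maSet D (pa D v) = maSet D (pa D w \ {v}) ∧ v ∉ anSet D (pa D w \ {v})


section Auxiliary

variable {D : Digraph V}

lemma no_two_cycle (hD : IsDAG D) {x y : V} (h1 : D.Adj x y) (h2 : D.Adj y x) : False :=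
  hD x (Relation.TransGen.head h1 (Relation.TransGen.single h2))

lemma chain'_adj {l : List V} (hc : l.Chain' D.Adj) {i : ℕ} (h : i + 1 < l.length) :
    D.Adj l[i] l[i+1] := by
  have := List.isChain_iff_getElem.mp hc i (by omega)
  simpa using this

lemma chain'_transGen {l : List V} (hc : l.Chain' D.Adj) :
    ∀ {i j : ℕ}, (hij : i < j) → (hj : j < l.length) →
      Relation.TransGen D.Adj (l[i]'(by omega)) l[j] := by
  intro i j
  induction j with
  | zero => omega
  | succ j ih =>
    intro hij hj
    rcases Nat.lt_or_ge i j with h | h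
    · exact (ih h (by omega)).tail (chain'_adj hc hj)
    · have : i = j := by omega
      subst this
      exact Relation.TransGen.single (chain'_adj hc hj)

lemma chain'_nodup (hD : IsDAG D) {l : List V} (hc : l.Chain' D.Adj) : l.Nodup := by
  rw [List.nodup_iff_injective_get]
  rintro ⟨i, hi⟩ ⟨j, hj⟩ hij
  simp only [List.get_eq_getElem] at hij
  rcases Nat.lt_trichotomy i j with h | h | h
  · exact absurd (hij ▸ chain'_transGen hc h hj) (hD _)
  · simpa using h
  · exact absurd (chain'_transGen hc h hi) (by rw [hij]; exact hD _)

lemma exists_chain_list {u v : V} (h : Relation.ReflTransGen D.Adj u v) :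
    ∃ l : List V, l.Chain' D.Adj ∧ l.head? = some u ∧ l.getLast? = some v := by
  obtain ⟨l, hc, hl⟩ := List.exists_isChain_cons_of_relationReflTransGen h
  exact ⟨u :: l, hc, rfl, by rw [List.getLast?_eq_getLast (List.cons_ne_nil _ _), hl]⟩

lemma rtg_of_chain {l : List V} {u v : V} (hc : l.Chain' D.Adj) (hh : l.head? = some u)
    (hl : l.getLast? = some v) : Relation.ReflTransGen D.Adj u v := by
  cases l with
  | nil => simp at hh
  | cons a t =>
    obtain rfl : a = u := by simpa using hh
    exact List.relationReflTransGen_of_exists_isChain_cons t hc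
      (by simpa [List.getLast?_eq_getLast] using hl)

lemma valley_trek (hD : IsDAG D) (L : List V) (hn : L.Nodup) (k : ℕ)
    (hdown : ∀ i, (h : i + 1 < L.length) → i < k → D.Adj L[i+1] L[i])
    (hup : ∀ i, (h : i + 1 < L.length) → k ≤ i → D.Adj L[i] L[i+1]) :
    IsTrekList D L := by
  refine ⟨hn, ?_, ?_⟩
  · intro i h
    simp only [List.get_eq_getElem]
    rcases Nat.lt_or_ge i k with hik | hik
    · exact Or.inr (hdown i h hik)
    · exact Or.inl (hup i h hik)
  · intro i h hcol
    simp only [List.get_eq_getElem] at hcol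
    rcases Nat.lt_or_ge i k with hik | hik
    · exact no_two_cycle hD hcol.1 (hdown i (by omega) hik)
    · exact no_two_cycle hD (hup (i+1) h (by omega)) hcol.2

lemma splice_trek (hD : IsDAG D) (P : List V) (T : List V) (u v w : V)
    (hP : P.Chain' D.Adj) (hQ : (u :: T).Chain' D.Adj)
    (hPh : P.head? = some u) (hPl : P.getLast? = some v)
    (hQl : (u :: T).getLast? = some w)
    (hPnd : P.Nodup) (hQnd : (u :: T).Nodup)
    (hdisj : ∀ t, t ∈ P → t ∈ u :: T → t = u) :
    HasTrek D v w := by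
  have hPne : P ≠ [] := by rintro rfl; simp at hPh
  have hPlen : 1 ≤ P.length := List.length_pos_iff.mpr hPne
  have hP0 : P[0]'(by omega) = u := by
    cases P with
    | nil => simp at hPh
    | cons a t => simpa using hPh
  have hLlen : (P.reverse ++ T).length = P.length + T.length := by simp
  have hLQ : ∀ i, (h1 : P.length - 1 ≤ i) → (h2 : i < (P.reverse ++ T).length) →
      (P.reverse ++ T)[i] = (u :: T)[i - (P.length - 1)]'(by simp at h2 ⊢; omega) := by
    intro i h1 h2
    rcases Nat.lt_or_ge i P.length with hi | hi
    · have hieq : i = P.length - 1 := by omega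
      subst hieq
      rw [List.getElem_append_left (by simpa using hi)]
      rw [List.getElem_reverse]
      simp only [Nat.sub_self, List.getElem_cons_zero]
      exact hP0
    · rw [List.getElem_append_right (by simpa using hi)]
      have he : i - (P.length - 1) = (i - P.length) + 1 := by omega
      simp only [he, List.getElem_cons_succ]
      congr 1
      simp
  have hLP : ∀ i, (h1 : i < P.length) → (h2 : i < (P.reverse ++ T).length) →
      (P.reverse ++ T)[i] = P[P.length - 1 - i]'(by omega) := by
    intro i h1 h2
    rw [List.getElem_append_left (by simpa using h1), List.getElem_reverse]
  refine ⟨P.reverse ++ T, valley_trek hD _ ?_ (P.length - 1) ?_ ?_, ?_, ?_⟩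
  · rw [List.nodup_append]
    refine ⟨by simpa using hPnd, (List.nodup_cons.mp hQnd).2, ?_⟩
    intro x hx b hx' hxb; subst hxb
    have hxP : x ∈ P := by simpa using hx
    have hxu : x = u := hdisj x hxP (List.mem_cons_of_mem _ hx')
    subst hxu
    exact (List.nodup_cons.mp hQnd).1 hx'
  · intro i h hik
    rw [hLP i (by omega) (by omega), hLP (i+1) (by omega) (by omega)]
    have h' : (P.length - 1 - (i+1)) + 1 < P.length := by omega
    have hadj := chain'_adj hP h'
    convert hadj using 2
    omega
  · intro i h hik
    rw [hLQ i hik (by omega), hLQ (i+1) (by omega) h]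
    have h' : (i - (P.length - 1)) + 1 < (u :: T).length := by
      simp only [hLlen] at h; simp; omega
    have hadj := chain'_adj hQ h'
    convert hadj using 2
    omega
  · cases hrev : P.reverse with
    | nil => exact absurd (by simpa using hrev) hPne
    | cons a s =>
      have hh : P.reverse.head? = some v := by rw [List.head?_reverse]; exact hPl
      rw [hrev] at hh
      simp only [List.head?_cons, Option.some.injEq] at hh
      simp [hrev, hh]
  · cases T with
    | nil =>
      have huw : u = w := by simpa using hQl
      subst huw
      simp only [List.append_nil, List.getLast?_reverse]
      exact hPh
    | cons b s =>
      rw [List.getLast?_append]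
      have hbs : (b :: s).getLast? = some w := by
        rw [← hQl, List.getLast?_cons_cons]
      rw [hbs]
      rfl

lemma trek_tail {x : V} {t : List V} (hp : IsTrekList D (x :: t)) : IsTrekList D t := by
  obtain ⟨hnd, hedge, hcol⟩ := hp
  refine ⟨hnd.of_cons, ?_, ?_⟩
  · intro i h
    have := hedge (i+1) (by simp only [List.length_cons]; omega)
    simpa using this
  · intro i h
    have := hcol (i+1) (by simp only [List.length_cons]; omega)
    simpa using this

lemma trek_chain' {p : List V} (hp : IsTrekList D p) (h2 : 2 ≤ p.length)
    (h01 : D.Adj (p[0]'(by omega)) (p[1]'(by omega))) : p.Chain' D.Adj := by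
  have key : ∀ i, (h : i + 1 < p.length) → D.Adj p[i] p[i+1] := by
    intro i
    induction i with
    | zero => intro h; exact h01
    | succ i ih =>
      intro h
      have hi := ih (by omega)
      have hcol := hp.2.2 i (by omega)
      have hedge := hp.2.1 (i+1) h
      simp only [List.get_eq_getElem] at hcol hedge
      rcases hedge with h' | h'
      · exact h'
      · exact absurd ⟨hi, h'⟩ hcol
  apply List.isChain_iff_getElem.mpr
  intro i h
  simpa using key i (by omega)

lemma trek_common_anc : ∀ (p : List V), IsTrekList D p → ∀ v w : V,
    p.head? = some v → p.getLast? = some w →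
    ∃ u, Relation.ReflTransGen D.Adj u v ∧ Relation.ReflTransGen D.Adj u w := by
  intro p
  induction p with
  | nil => intro _ v w hv _; simp at hv
  | cons x t ih =>
    intro hp v w hv hw
    obtain rfl : x = v := by simpa using hv
    cases t with
    | nil =>
      obtain rfl : x = w := by simpa using hw
      exact ⟨x, .refl, .refl⟩
    | cons y r =>
      have hedge := hp.2.1 0 (by simp)
      simp only [List.get_eq_getElem] at hedge
      rcases hedge with h01 | h10
      · have hc := trek_chain' hp (by simp) (by simpa using h01)
        exact ⟨x, .refl, rtg_of_chain hc hv hw⟩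
      · have htl : (y :: r).getLast? = some w := by
          rw [← hw, List.getLast?_cons_cons]
        obtain ⟨u, hu1, hu2⟩ := ih (trek_tail hp) y w rfl htl
        exact ⟨u, hu1.tail (by simpa using h10), hu2⟩

lemma hasTrek_of_chains (hD : IsDAG D) :
    ∀ n (P Q : List V) (u v w : V), P.length + Q.length = n →
    P.Chain' D.Adj → Q.Chain' D.Adj → P.head? = some u → Q.head? = some u →
    P.getLast? = some v → Q.getLast? = some w → HasTrek D v w := by
  intro n
  induction n using Nat.strong_induction_on with
  | _ n ih =>
  intro P Q u v w hn hP hQ hPh hQh hPl hQl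
  by_cases hdisj : ∀ t, t ∈ P → t ∈ Q → t = u
  · cases Q with
    | nil => simp at hQh
    | cons a T =>
      obtain rfl : a = u := by simpa using hQh
      exact splice_trek hD P T a v w hP hQ hPh hPl hQl
        (chain'_nodup hD hP) (chain'_nodup hD hQ) hdisj
  · push_neg at hdisj
    obtain ⟨t, htP, htQ, htu⟩ := hdisj
    obtain ⟨i, hi, hPi⟩ := List.getElem_of_mem htP
    obtain ⟨j, hj, hQj⟩ := List.getElem_of_mem htQ
    have hP0 : P[0]'(by omega) = u := by
      cases P with
      | nil => simp at hPh
      | cons a s => simpa using hPh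
    have hQ0 : Q[0]'(by omega) = u := by
      cases Q with
      | nil => simp at hQh
      | cons a s => simpa using hQh
    have hi0 : 0 < i := by
      rcases Nat.eq_zero_or_pos i with rfl | h
      · exact absurd (hPi.symm.trans hP0) htu
      · exact h
    have hj0 : 0 < j := by
      rcases Nat.eq_zero_or_pos j with rfl | h
      · exact absurd (hQj.symm.trans hQ0) htu
      · exact h
    have hPd : (P.drop i).head? = some t := by
      rw [List.head?_drop]
      simp [List.getElem?_eq_getElem hi, hPi]
    have hQd : (Q.drop j).head? = some t := by
      rw [List.head?_drop]
      simp [List.getElem?_eq_getElem hj, hQj]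
    have hPdl : (P.drop i).getLast? = some v := by
      have hne : P.drop i ≠ [] := by
        simp only [ne_eq, List.drop_eq_nil_iff]
        omega
      obtain ⟨x, hx⟩ := List.getLast?_isSome.mpr hne |> Option.isSome_iff_exists.mp
      rw [hx]
      conv at hPl => rw [← List.take_append_drop i P]
      rw [List.getLast?_append, hx] at hPl
      simpa using hPl
    have hQdl : (Q.drop j).getLast? = some w := by
      have hne : Q.drop j ≠ [] := by
        simp only [ne_eq, List.drop_eq_nil_iff]
        omega
      obtain ⟨x, hx⟩ := List.getLast?_isSome.mpr hne |> Option.isSome_iff_exists.mp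
      rw [hx]
      conv at hQl => rw [← List.take_append_drop j Q]
      rw [List.getLast?_append, hx] at hQl
      simpa using hQl
    exact ih ((P.drop i).length + (Q.drop j).length) (by simp; omega)
      (P.drop i) (Q.drop j) t v w rfl (hP.drop i) (hQ.drop j) hPd hQd hPdl hQdl

/-- Master characterization: in a DAG, there is a trek between `v` and `w` iff
they have a common ancestor. -/
lemma hasTrek_iff (hD : IsDAG D) (v w : V) :
    HasTrek D v w ↔ ∃ u, Relation.ReflTransGen D.Adj u v ∧ Relation.ReflTransGen D.Adj u w := by
  constructor
  · rintro ⟨p, hp, hh, hl⟩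
    exact trek_common_anc p hp v w hh hl
  · rintro ⟨u, h1, h2⟩
    obtain ⟨P, hP, hPh, hPl⟩ := exists_chain_list h1
    obtain ⟨Q, hQ, hQh, hQl⟩ := exists_chain_list h2
    exact hasTrek_of_chains hD (P.length + Q.length) P Q u v w rfl hP hQ hPh hQh hPl hQl

lemma source_anc {m u : V} (hs : pa D m = ∅) (h : Relation.ReflTransGen D.Adj u m) :
    u = m := by
  rcases Relation.ReflTransGen.cases_tail h with h' | ⟨b, _, hb⟩
  · exact h'.symm
  · exact absurd hb (by
      have := Set.eq_empty_iff_forall_notMem.mp hs b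
      simpa [pa] using this)

lemma exists_source_anc [Fintype V] (hD : IsDAG D) (v : V) :
    ∃ m, pa D m = ∅ ∧ Relation.ReflTransGen D.Adj m v := by
  have hirr : IsIrrefl V (Relation.TransGen D.Adj) := ⟨hD⟩
  have hwf := Finite.wellFounded_of_trans_of_irrefl (Relation.TransGen D.Adj)
  obtain ⟨m, hm, hmin⟩ := hwf.has_min (an D v) ⟨v, Relation.ReflTransGen.refl⟩
  refine ⟨m, ?_, hm⟩
  rw [Set.eq_empty_iff_forall_notMem]
  intro x hx
  exact hmin x (Relation.ReflTransGen.head hx hm) (Relation.TransGen.single hx)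

lemma de_source_eq (hD : IsDAG D) {m : V} (hm : pa D m = ∅) :
    de D m = {w | HasTrek D m w} := by
  ext w
  rw [Set.mem_setOf_eq, hasTrek_iff hD]
  constructor
  · intro h
    exact ⟨m, .refl, h⟩
  · rintro ⟨u, h1, h2⟩
    rw [source_anc hm h1] at h2
    exact h2

lemma main_subset [Fintype V] (D D' : Digraph V) (hD : IsDAG D)
    (hD' : IsDAG D') (h : UncondEquiv D D') :
    de D '' sources D ⊆ de D' '' sources D' := by
  rintro S ⟨m, hm, rfl⟩
  have hms : pa D m = ∅ := hm
  obtain ⟨m', hm', hma⟩ := exists_source_anc hD' m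
  refine ⟨m', hm', ?_⟩
  have hde : de D m = {w | HasTrek D m w} := de_source_eq hD hms
  have hde' : de D' m' = {w | HasTrek D' m' w} := de_source_eq hD' hm'
  -- m' ∈ de D m
  have hm'de : m' ∈ de D m := by
    rcases eq_or_ne m' m with rfl | hne
    · exact Relation.ReflTransGen.refl
    · rw [hde, Set.mem_setOf_eq]
      rw [h m m' (Ne.symm hne)]
      exact (hasTrek_iff hD' m m').mpr ⟨m', hma, .refl⟩
  ext x
  rw [hde', Set.mem_setOf_eq]
  constructor
  · intro hx
    obtain ⟨u, hu1, hu2⟩ := (hasTrek_iff hD' m' x).mp hx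
    rw [source_anc hm' hu1] at hu2
    rcases eq_or_ne x m with rfl | hxm
    · exact Relation.ReflTransGen.refl
    · have hx' : HasTrek D' m x := (hasTrek_iff hD' m x).mpr ⟨m', hma, hu2⟩
      have hx'' := (h m x (Ne.symm hxm)).mpr hx'
      rw [hde, Set.mem_setOf_eq]
      exact hx''
  · intro hx
    rcases eq_or_ne m' x with rfl | hxm
    · exact (hasTrek_iff hD' m' m').mpr ⟨m', .refl, .refl⟩
    · have hDx : HasTrek D m' x := (hasTrek_iff hD m' x).mpr ⟨m, hm'de, hx⟩
      exact (h m' x hxm).mp hDx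

end Auxiliary

/-- Unconditionally equivalent DAGs on the same finite vertex
set have the same family `E^D = {de_D(m) : m a source node of D}`. -/
theorem ecc_eq_of_uncondEquiv [Fintype V] (D D' : Digraph V) (hD : IsDAG D)
    (hD' : IsDAG D') (h : UncondEquiv D D') :
    de D '' sources D = de D' '' sources D' := by
  apply Set.Subset.antisymm
  · exact main_subset D D' hD hD' h
  · exact main_subset D' D hD' hD (fun v w hvw => (h v w hvw).symm)

end UEC
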